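/- Let L be a positive-definite linear functional on real polynomials (i.e. L[p²] > 0 for every nonzero polynomial p), and let (P_n) be the monic orthogonal polynomials with respect to L. If x_{n,k} is a zero of P_n and R_{n,k}(x) = P_n(x)/(x − x_{n,k}), then the numbers τ_{i,n,k} = L[P_i · R_{n,k}] satisfy the recurrence τ_{i+1,n,k} = (x_{n,k} − α_i)·τ_{i,n,k} − β_i·τ_{i−1,n,k} for 0 ≤ i < n, where α_i, β_i are the coefficients of the three-term recurrence P_{i+1}(x) = (x − α_i)P_i(x) − β_i P_{i−1}(x). -/
import Mathlib


open Polynomial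

theorem tau_recurrence
    (L : Polynomial ℝ →ₗ[ℝ] ℝ)
    (hpos : ∀ p : Polynomial ℝ, p ≠ 0 → 0 < L (p ^ 2))
    (P : ℕ → Polynomial ℝ)
    (hmonic : ∀ k, (P k).Monic)
    (hdeg : ∀ k, (P k).natDegree = k)
    (horth : ∀ i j, i ≠ j → L (P i * P j) = 0)
    (α β : ℕ → ℝ) (hβ : ∀ i, 0 < β i)
    (hP0 : P 0 = 1)
    (hPrec : ∀ i, P (i + 1) = (X - Polynomial.C (α i)) * P i
      - Polynomial.C (β i) * (if i = 0 then 0 else P (i - 1)))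
    (n : ℕ) (xnk : ℝ) (hroot : (P n).eval xnk = 0)
    (R : Polynomial ℝ) (hR : P n = (X - Polynomial.C xnk) * R)
    (τ : ℕ → ℝ) (hτ : ∀ i, τ i = L (P i * R)) :
    ∀ i < n, τ (i + 1) = (xnk - α i) * τ i - β i * (if i = 0 then 0 else τ (i - 1)) := by
  intro i hi
  have horthn : L (P i * P n) = 0 := horth i n (Nat.ne_of_lt hi)
  have key : P (i + 1) * R
      = P i * P n + xnk • (P i * R) - α i • (P i * R)
        - β i • ((if i = 0 then 0 else P (i - 1)) * R) := by
    rw [Polynomial.smul_eq_C_mul, Polynomial.smul_eq_C_mul, Polynomial.smul_eq_C_mul,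
      hPrec i, hR]
    ring
  rw [hτ, hτ, key, map_sub, map_sub, map_add, map_smul, map_smul, map_smul, horthn]
  simp only [smul_eq_mul]
  by_cases h0 : i = 0
  · simp only [h0, if_pos, mul_zero, map_zero, zero_mul]
    simp
    ring
  · simp only [h0, if_false]
    rw [← hτ (i - 1)]
    ring
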